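/- For k ≥ 2, let m(k) be the number of 4-element subsets A of the leaves of the complete balanced binary tree with 2^k leaves such that the restriction tree to A has the balanced shape Bal_4. Then m satisfies the recurrence m(k) = 2·m(k−1) + C(2^{k−1}, 2)² (with m(1) = 0), has closed form m(k) = Σ_{i=1}^{k−1} 2^{k−i−1}·C(2^i, 2)², and satisfies m(k)/C(2^k, 4) = (3·2^k − 5)/(7·2^k − 21); consequently m(k)/C(2^k,4) → 3/7 as k → ∞. -/

import Mathlib

/-! ## Rooted binary trees, shapes, restriction, distributions -/

/-- Rooted binary trees with leaves labelled by `α`: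
a tree is either a single (labelled) leaf, or an (ordered) pair of subtrees. -/
inductive RBT (α : Type) : Type
  | leaf (a : α) : RBT α
  | node (l r : RBT α) : RBT α
  deriving DecidableEq

namespace RBT

variable {α β : Type}

/-- The multiset of leaf labels of a tree. -/
def leaves : RBT α → Multiset α
  | leaf a => {a}
  | node l r => leaves l + leaves r

/-- The number of leaves of a tree. -/
def numLeaves : RBT α → ℕ
  | leaf _ => 1
  | node l r => numLeaves l + numLeaves r

/-- Relabel the leaves of a tree. -/
def map (f : α → β) : RBT α → RBT β
  | leaf a => leaf (f a)
  | node l r => node (map f l) (map f r)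

end RBT

/-- Unlabelled rooted binary trees. -/
abbrev UTree : Type := RBT Unit

namespace RBT

variable {α : Type}

/-- Forget the leaf labels of a tree. -/
def forget (t : RBT α) : UTree := t.map fun _ => ()

/-- Structural comparison on unlabelled trees (a leaf is smaller than an internal
node; internal nodes are compared lexicographically on their children). -/
def cmpT : UTree → UTree → Ordering
  | leaf _, leaf _ => .eq
  | leaf _, node _ _ => .lt
  | node _ _, leaf _ => .gt
  | node a b, node c d => (cmpT a c).then (cmpT b d)

/-- Canonical form (AHU) of an unlabelled rooted binary tree: recursively put the
two children of every internal vertex in nondecreasing `cmpT` order.  Two rooted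
binary trees are isomorphic (equal as *shapes*) iff their canonical forms are
equal, so canonical forms faithfully encode the set `RB_U` of tree shapes. -/
def canon : UTree → UTree
  | leaf a => leaf a
  | node l r =>
      let l' := canon l
      let r' := canon r
      if cmpT l' r' = Ordering.gt then node r' l' else node l' r'

/-- The shape (leaf-relabelling isomorphism class, encoded as a canonical form)
of a labelled tree. -/
def shape (t : RBT α) : UTree := canon (forget t)

/-- Restriction `T|_A` of a tree to the leaves with labels in `A`: delete all
leaves outside `A` and suppress the resulting degree-two vertices (the result is
rooted at the most recent common ancestor of `A`); `none` if no leaf survives. -/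
def restrict [DecidableEq α] (A : Finset α) : RBT α → Option (RBT α)
  | leaf a => if a ∈ A then some (leaf a) else none
  | node l r =>
      match restrict A l, restrict A r with
      | some l', some r' => some (node l' r')
      | some l', none => some l'
      | none, some r' => some r'
      | none, none => none

end RBT

/-- `T ∈ RB_L(n)`: the leaves of `T` are labelled bijectively by `[n] = {0, …, n-1}`. -/
def IsPhylo (n : ℕ) (T : RBT ℕ) : Prop := T.leaves = Multiset.range n

instance (n : ℕ) (T : RBT ℕ) : Decidable (IsPhylo n T) :=
  inferInstanceAs (Decidable (T.leaves = Multiset.range n))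

/-- `p` is a probability distribution on `RB_L(n)` (viewed as a vector with
coordinates indexed by labelled trees): nonnegative, supported on `RB_L(n)`,
with total mass one. -/
structure IsDist (n : ℕ) (p : RBT ℕ → ℝ) : Prop where
  nonneg : ∀ T, 0 ≤ p T
  supp : ∀ T, ¬ IsPhylo n T → p T = 0
  total : HasSum p 1

/-- `p` is exchangeable: relabelling the leaves by any permutation of `[n]`
does not change probabilities. -/
def Exchangeable (n : ℕ) (p : RBT ℕ → ℝ) : Prop :=
  ∀ σ : Equiv.Perm ℕ, (∀ i, i < n → σ i < n) → ∀ T : RBT ℕ, p (T.map ⇑σ) = p T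

/-- `EX_n`: the exchangeable probability distributions on `RB_L(n)`. -/
def EX (n : ℕ) : Set (RBT ℕ → ℝ) := {p | IsDist n p ∧ Exchangeable n p}

/-- `O(u)`: the labelled trees in `RB_L(n)` whose shape is (the shape of) `u`. -/
def orbitSet (n : ℕ) (u : UTree) : Set (RBT ℕ) :=
  {T | IsPhylo n T ∧ T.shape = RBT.canon u}

/-- `p_u`: the exchangeable distribution that is uniform on `O(u)` and zero
elsewhere. -/
noncomputable def pShape (n : ℕ) (u : UTree) : RBT ℕ → ℝ := fun T =>
  if IsPhylo n T ∧ T.shape = RBT.canon u then ((orbitSet n u).ncard : ℝ)⁻¹ else 0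

/-- Marginalization map `π_n` from distributions on `RB_L(m)` to distributions on
`RB_L(n)`: `π_n(p)(T) = Σ_{S ∈ RB_L(m), S|_{[n]} = T} p(S)`. -/
noncomputable def marg (m n : ℕ) (p : RBT ℕ → ℝ) : RBT ℕ → ℝ := fun T =>
  ∑' S : RBT ℕ, if IsPhylo m S ∧ RBT.restrict (Finset.range n) S = some T then p S else 0

/-- `EX_n^m = π_n(EX_m)`: the `m`-sampling consistent exchangeable distributions
on `RB_L(n)`. -/
def EXP (n m : ℕ) : Set (RBT ℕ → ℝ) := marg m n '' EX m

/-- `EX_n^∞ = ⋂_{m ≥ n} EX_n^m`: the exchangeable and (infinitely) sampling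
consistent distributions on `RB_L(n)`. -/
def EXinf (n : ℕ) : Set (RBT ℕ → ℝ) := ⋂ (m : ℕ) (_ : n ≤ m), EXP n m

/-- The shapes with `n` leaves (`RB_U(n)`), encoded as canonical forms. -/
def ShapeOn (n : ℕ) : Type := {u : UTree // RBT.canon u = u ∧ u.numLeaves = n}

/-! ## Particular shapes -/

/-- The comb (caterpillar) shape `Comb_k` with `k` leaves. -/
def combU : ℕ → UTree
  | 0 => .leaf ()
  | 1 => .leaf ()
  | n + 2 => .node (.leaf ()) (combU (n + 1))

/-- `comb(t, k)`: the comb with `k` leaves in which one of the two deepest leaves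
is replaced by the tree `t`. -/
def combWith (t : UTree) : ℕ → UTree
  | 0 => t
  | 1 => t
  | n + 2 => .node (.leaf ()) (combWith t (n + 1))

/-- The balanced shape `Bal_4` on four leaves (two cherries joined at the root). -/
def bal4U : UTree := .node (.node (.leaf ()) (.leaf ())) (.node (.leaf ()) (.leaf ()))

/-- The giraffe shape `Gir_5 = comb(Bal_4, 2)` on five leaves. -/
def gir5U : UTree := combWith bal4U 2

/-- The balanced shape `Bal_5` on five leaves (a cherry and a three-leaf comb
joined at the root). -/
def bal5U : UTree := .node (.node (.leaf ()) (.leaf ())) (combU 3)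

/-- `bicomb(a, b)`: the shape obtained by joining `Comb_a` and `Comb_b` at a new
root. -/
def bicombU (a b : ℕ) : UTree := .node (combU a) (combU b)

/-- The complete balanced binary tree with `2^k` leaves. -/
def fullBal : ℕ → UTree
  | 0 => .leaf ()
  | k + 1 => .node (fullBal k) (fullBal k)

/-- A shape is maximally balanced if at every internal vertex the numbers of
leaves of the two child subtrees differ by at most one. -/
def IsMaxBalanced : UTree → Prop
  | .leaf _ => True
  | .node l r =>
      (l.numLeaves ≤ r.numLeaves + 1 ∧ r.numLeaves ≤ l.numLeaves + 1)
        ∧ IsMaxBalanced l ∧ IsMaxBalanced r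

/-! ## Counting restriction subtrees -/

/-- Label the leaves of an unlabelled tree `0, 1, 2, …` from left to right
(auxiliary function threading the next fresh label). -/
def labelFrom : UTree → ℕ → RBT ℕ × ℕ
  | .leaf _, k => (.leaf k, k + 1)
  | .node l r, k =>
      let pl := labelFrom l k
      let pr := labelFrom r pl.2
      (.node pl.1 pr.1, pr.2)

/-- A labelled representative of an unlabelled tree, with distinct leaf labels. -/
def label (u : UTree) : RBT ℕ := (labelFrom u 0).1

/-- The number of `k`-element subsets `A` of the leaves of (a labelled
representative of) `u` such that the restriction tree `u|_A` has shape `s`. -/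
def countRestr (u : UTree) (s : UTree) (k : ℕ) : ℕ :=
  (((label u).leaves.toFinset.powersetCard k).filter
    (fun A => Option.map RBT.shape (RBT.restrict A (label u)) = some (RBT.canon s))).card

/-- `c_5(u)`: the number of `5`-element subsets of the leaves of `u` whose
restriction tree is the five-leaf comb. -/
def c5 (u : UTree) : ℕ := countRestr u (combU 5) 5

/-! ## One-hole contexts (for subtree-swapping statements) -/

/-- One-hole contexts for unlabelled rooted binary trees: a position in a tree at
which a subtree may be substituted. -/
inductive Ctx : Type
  | hole : Ctx
  | nodeL (c : Ctx) (r : UTree) : Ctx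
  | nodeR (l : UTree) (c : Ctx) : Ctx

/-- Fill the hole of a context with a tree. -/
def Ctx.fill : Ctx → UTree → UTree
  | .hole, t => t
  | .nodeL c r, t => .node (c.fill t) r
  | .nodeR l c, t => .node l (c.fill t)

/-! ## The multinomial model -/

/-- A multiset of edges of a tree shape, encoded as the shape with a
multiplicity attached to every vertex (each vertex stands for the edge directly
above it; the root vertex stands for the root edge of the extended tree). -/
inductive MTree : Type
  | leaf (k : ℕ) : MTree
  | node (k : ℕ) (l r : MTree) : MTree
  deriving DecidableEq

namespace MTree

/-- The underlying tree shape of a multiplicity assignment. -/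
def strip : MTree → UTree
  | leaf _ => .leaf ()
  | node _ l r => .node (strip l) (strip r)

/-- The total number of chosen edges (with multiplicity). -/
def total : MTree → ℕ
  | leaf k => k
  | node k l r => k + total l + total r

/-- The product of the factorials of the multiplicities (denominator of the
multinomial coefficient). -/
def factProd : MTree → ℕ
  | leaf k => k.factorial
  | node k l r => k.factorial * factProd l * factProd r

/-- The product `Π_e t_e^{m_A(e)}` of edge-parameter powers, for the parameter
vector assigning `c` to every pendant edge and `0` to every other edge. -/
noncomputable def wProd (c : ℝ) : MTree → ℝ
  | leaf k => c ^ k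
  | node k l r => (0 : ℝ) ^ k * wProd c l * wProd c r

/-- Join two optional trees at a new root. -/
def mergeO : Option UTree → Option UTree → Option UTree
  | some l, some r => some (.node l r)
  | some l, none => some l
  | none, some r => some r
  | none, none => none

/-- Attach `k` new leaves along the edge above an (optional) already-built tree. -/
def attach : ℕ → Option UTree → Option UTree
  | 0, s => s
  | k + 1, s =>
      match attach k s with
      | none => some (.leaf ())
      | some t => some (.node (.leaf ()) t)

/-- `T_A`: attach one new leaf to an edge for each of its occurrences in the
multiset `A`, and restrict the resulting tree to the new leaves. -/
def build : MTree → Option UTree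
  | leaf k => attach k none
  | node k l r => attach k (mergeO (build l) (build r))

end MTree

/-- The probability, under the multinomial model on the shape `T` (with edge
parameter `c` on every pendant edge and `0` on every other edge), that a random
multiset `A` of `n` edges yields a tree `T_A` of shape `s`:
`d(s) = Σ_{A, T_A = s} C(n; m_A) Π_e t_e^{m_A(e)}`. -/
noncomputable def multinomDist (T : UTree) (c : ℝ) (n : ℕ) (s : UTree) : ℝ :=
  ∑' a : MTree,
    if a.strip = T ∧ a.total = n ∧ Option.map RBT.canon a.build = some (RBT.canon s) then
      ((n.factorial : ℝ) / (a.factProd : ℝ)) * MTree.wProd c a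
    else 0

namespace RBT
variable {α : Type} [DecidableEq α]

lemma one_le_numLeaves (t : RBT α) : 1 ≤ t.numLeaves := by
  induction t with
  | leaf a => exact le_refl 1
  | node l r ihl ihr => simp only [numLeaves]; omega

lemma card_leaves (t : RBT α) : Multiset.card t.leaves = t.numLeaves := by
  induction t with
  | leaf a => rfl
  | node l r ihl ihr => simp [leaves, numLeaves, ihl, ihr]

lemma eq_leaf_of_numLeaves_eq_one {t : RBT α} (h : t.numLeaves = 1) : ∃ a, t = leaf a := by
  cases t with
  | leaf a => exact ⟨a, rfl⟩
  | node l r =>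
    have h1 := one_le_numLeaves l
    have h2 := one_le_numLeaves r
    simp only [numLeaves] at h; omega

lemma restrict_leaves (A : Finset α) (t : RBT α) :
    (restrict A t).elim (0 : Multiset α) leaves = t.leaves.filter (· ∈ A) := by
  induction t with
  | leaf a =>
    simp only [restrict, leaves, Multiset.filter_singleton]
    by_cases h : a ∈ A <;> simp [h, leaves]
  | node l r ihl ihr =>
    simp only [restrict, leaves, Multiset.filter_add, ← ihl, ← ihr]
    rcases restrict A l with _ | l' <;> rcases restrict A r with _ | r' <;> simp [leaves]

lemma restrict_none_iff (A : Finset α) (t : RBT α) :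
    restrict A t = none ↔ t.leaves.filter (· ∈ A) = 0 := by
  rw [← restrict_leaves A t]
  rcases h : restrict A t with _ | t' <;> simp
  · cases t' with
    | leaf a => simp [leaves]
    | node l r =>
      simp only [leaves]
      intro hh
      have := congrArg Multiset.card hh
      simp [card_leaves] at this
      have := one_le_numLeaves l; have := one_le_numLeaves r
      omega

lemma restrict_some_leaves {A : Finset α} {t t' : RBT α} (h : restrict A t = some t') :
    t'.leaves = t.leaves.filter (· ∈ A) := by
  have := restrict_leaves A t
  rw [h] at this
  exact this

end RBT

set_option linter.unusedSectionVars false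

namespace RBT
variable {α : Type} [DecidableEq α]

lemma numLeaves_map (f : α → β) (t : RBT α) : (t.map f).numLeaves = t.numLeaves := by
  induction t with
  | leaf a => rfl
  | node l r ihl ihr => simp [map, numLeaves, ihl, ihr]

lemma numLeaves_canon (u : UTree) : (canon u).numLeaves = u.numLeaves := by
  induction u with
  | leaf a => rfl
  | node l r ihl ihr =>
    simp only [canon]
    split <;> simp [numLeaves, ihl, ihr] <;> omega

lemma numLeaves_shape (t : RBT α) : t.shape.numLeaves = t.numLeaves := by
  rw [shape, numLeaves_canon, forget, numLeaves_map]

lemma shape_node (l r : RBT α) :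
    shape (node l r) =
      if cmpT l.shape r.shape = Ordering.gt then .node r.shape l.shape
      else .node l.shape r.shape := by
  simp only [shape, forget, map, canon]
  rfl

lemma shape_cherry {t : RBT α} (h : t.numLeaves = 2) :
    t.shape = .node (.leaf ()) (.leaf ()) := by
  cases t with
  | leaf a => simp [numLeaves] at h
  | node l r =>
    have h1 := one_le_numLeaves l
    have h2 := one_le_numLeaves r
    simp only [numLeaves] at h
    obtain ⟨a, rfl⟩ := eq_leaf_of_numLeaves_eq_one (t := l) (by omega)
    obtain ⟨b, rfl⟩ := eq_leaf_of_numLeaves_eq_one (t := r) (by omega)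
    rfl

lemma shape_is_node {t : RBT α} (h : 2 ≤ t.numLeaves) :
    ∃ x y, t.shape = .node x y := by
  rcases hs : t.shape with a | ⟨x, y⟩
  · exfalso
    have := numLeaves_shape t
    rw [hs] at this
    simp [numLeaves] at this
    omega
  · exact ⟨x, y, rfl⟩

lemma shape_leaf' {t : RBT α} (h : t.numLeaves = 1) : t.shape = .leaf () := by
  obtain ⟨a, rfl⟩ := eq_leaf_of_numLeaves_eq_one h
  rfl

end RBT

lemma labelFrom_snd (u : UTree) (k : ℕ) : (labelFrom u k).2 = k + u.numLeaves := by
  induction u generalizing k with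
  | leaf a => rfl
  | node l r ihl ihr =>
    simp only [labelFrom, ihl, ihr, RBT.numLeaves]
    omega

lemma Ico_val_add (a b c : ℕ) (h1 : a ≤ b) (h2 : b ≤ c) :
    (Finset.Ico a b).val + (Finset.Ico b c).val = (Finset.Ico a c).val := by
  rw [← Finset.Ico_union_Ico_eq_Ico h1 h2,
    ← Finset.disjUnion_eq_union _ _ (Finset.Ico_disjoint_Ico_consecutive a b c)]
  rfl

lemma labelFrom_leaves (u : UTree) (k : ℕ) :
    (labelFrom u k).1.leaves = (Finset.Ico k (k + u.numLeaves)).val := by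
  induction u generalizing k with
  | leaf a => simp [labelFrom, RBT.leaves, RBT.numLeaves]
  | node l r ihl ihr =>
    simp only [labelFrom, RBT.leaves, RBT.numLeaves, ihl, ihr, labelFrom_snd]
    rw [← add_assoc]
    exact Ico_val_add _ _ _ (by omega) (by omega)

namespace RBT

lemma cmpT_leaf_ne_gt (u : Unit) (x : UTree) : cmpT (leaf u) x ≠ Ordering.gt := by
  cases x <;> simp [cmpT]

lemma restrict_none_iff' {t : RBT ℕ} {s A : Finset ℕ} (hl : t.leaves = s.val) :
    restrict A t = none ↔ s ∩ A = ∅ := by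
  rw [restrict_none_iff, hl, ← Finset.filter_val, Finset.filter_mem_eq_inter,
    Finset.val_eq_zero]

lemma numLeaves_restrict {t t' : RBT ℕ} {s A : Finset ℕ} (hl : t.leaves = s.val)
    (h : restrict A t = some t') : t'.numLeaves = (s ∩ A).card := by
  have h2 := restrict_some_leaves h
  have h3 := congrArg Multiset.card h2
  rw [card_leaves, hl, ← Finset.filter_val, Finset.filter_mem_eq_inter] at h3
  rw [h3, Finset.card]

end RBT

open RBT in
lemma node_shape_iff {l r : RBT ℕ} {I1 I2 : Finset ℕ} (hd : Disjoint I1 I2)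
    (hl : l.leaves = I1.val) (hr : r.leaves = I2.val)
    {A : Finset ℕ} (hA : A ⊆ I1 ∪ I2) (hcard : A.card = 4) :
    (Option.map RBT.shape (RBT.restrict A (.node l r)) = some bal4U) ↔
      ((A ⊆ I1 ∧ Option.map RBT.shape (RBT.restrict A l) = some bal4U) ∨
       (A ⊆ I2 ∧ Option.map RBT.shape (RBT.restrict A r) = some bal4U) ∨
       ((I1 ∩ A).card = 2 ∧ (I2 ∩ A).card = 2)) := by
  have hsplit : (I1 ∩ A).card + (I2 ∩ A).card = 4 := by
    rw [← Finset.card_union_of_disjoint (hd.mono Finset.inter_subset_left Finset.inter_subset_left),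
      ← Finset.union_inter_distrib_right, Finset.inter_eq_right.mpr hA, hcard]
  rcases hL : RBT.restrict A l with _ | l' <;> rcases hR : RBT.restrict A r with _ | r'
  · exfalso
    rw [restrict_none_iff' hl] at hL
    rw [restrict_none_iff' hr] at hR
    rw [hL, hR] at hsplit
    simp at hsplit
  · -- A ⊆ I2 case
    have hL' : I1 ∩ A = ∅ := (restrict_none_iff' hl).mp hL
    have hA2 : A ⊆ I2 := by
      intro a ha
      rcases Finset.mem_union.mp (hA ha) with h1 | h2
      · exact absurd (Finset.mem_inter.mpr ⟨h1, ha⟩) (by rw [hL']; simp)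
      · exact h2
    simp only [RBT.restrict, hL, hR]
    constructor
    · intro h
      exact Or.inr (Or.inl ⟨hA2, h⟩)
    · rintro (⟨h1, h2⟩ | ⟨h1, h2⟩ | ⟨h1, h2⟩)
      · simp at h2
      · exact h2
      · rw [hL'] at hsplit; simp at hsplit; omega
  · -- A ⊆ I1 case
    have hR' : I2 ∩ A = ∅ := (restrict_none_iff' hr).mp hR
    have hA1 : A ⊆ I1 := by
      intro a ha
      rcases Finset.mem_union.mp (hA ha) with h1 | h2
      · exact h1
      · exact absurd (Finset.mem_inter.mpr ⟨h2, ha⟩) (by rw [hR']; simp)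
    simp only [RBT.restrict, hL, hR]
    constructor
    · intro h
      exact Or.inl ⟨hA1, h⟩
    · rintro (⟨h1, h2⟩ | ⟨h1, h2⟩ | ⟨h1, h2⟩)
      · exact h2
      · simp at h2
      · rw [hR'] at hsplit; simp at hsplit; omega
  · -- both some
    have hn1 : l'.numLeaves = (I1 ∩ A).card := numLeaves_restrict hl hL
    have hn2 : r'.numLeaves = (I2 ∩ A).card := numLeaves_restrict hr hR
    have hpos1 : 1 ≤ l'.numLeaves := one_le_numLeaves l'
    have hpos2 : 1 ≤ r'.numLeaves := one_le_numLeaves r'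
    simp only [RBT.restrict, hL, hR, Option.map_some]
    have hnotsub1 : ¬ A ⊆ I1 := by
      intro hs
      have : I2 ∩ A = ∅ := by
        apply Finset.eq_empty_of_forall_notMem
        intro a ha
        rw [Finset.mem_inter] at ha
        exact (Finset.disjoint_left.mp hd (hs ha.2)) ha.1
      rw [(restrict_none_iff' hr).mpr this] at hR
      exact absurd hR (by simp)
    have hnotsub2 : ¬ A ⊆ I2 := by
      intro hs
      have : I1 ∩ A = ∅ := by
        apply Finset.eq_empty_of_forall_notMem
        intro a ha
        rw [Finset.mem_inter] at ha
        exact (Finset.disjoint_left.mp hd.symm (hs ha.2)) ha.1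
      rw [(restrict_none_iff' hl).mpr this] at hL
      exact absurd hL (by simp)
    simp only [hnotsub1, hnotsub2, false_and, false_or, Option.some.injEq]
    constructor
    · intro h
      by_contra hc
      have h22 : l'.numLeaves ≠ 2 ∨ r'.numLeaves ≠ 2 := by omega
      -- one of the sides has 1 leaf
      have : l'.numLeaves = 1 ∨ r'.numLeaves = 1 ∨
          (l'.numLeaves = 2 ∧ r'.numLeaves = 2) := by omega
      rcases this with h1 | h1 | h1
      · rw [shape_node, shape_leaf' h1] at h
        rw [if_neg (cmpT_leaf_ne_gt _ _)] at h
        exact absurd h (by rw [bal4U]; intro hh; injection hh with a b; cases a)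
      · rw [shape_node, shape_leaf' h1] at h
        obtain ⟨x, y, hxy⟩ := shape_is_node (t := l') (by omega)
        rw [hxy] at h
        rw [if_pos (by simp [cmpT])] at h
        exact absurd h (by rw [bal4U]; intro hh; injection hh with a b; cases a)
      · omega
    · rintro ⟨h1, h2⟩
      rw [shape_node, shape_cherry (by omega : l'.numLeaves = 2),
        shape_cherry (by omega : r'.numLeaves = 2)]
      rfl

open RBT in
lemma card_filter_bal {l r : RBT ℕ} {I1 I2 : Finset ℕ} (hd : Disjoint I1 I2)
    (hl : l.leaves = I1.val) (hr : r.leaves = I2.val) :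
    (((I1 ∪ I2).powersetCard 4).filter
        (fun A => Option.map RBT.shape (RBT.restrict A (.node l r)) = some bal4U)).card =
      ((I1.powersetCard 4).filter
        (fun A => Option.map RBT.shape (RBT.restrict A l) = some bal4U)).card +
      ((I2.powersetCard 4).filter
        (fun A => Option.map RBT.shape (RBT.restrict A r) = some bal4U)).card +
      I1.card.choose 2 * I2.card.choose 2 := by
  have heq := Finset.filter_congr (s := (I1 ∪ I2).powersetCard 4)
    (p := fun A => Option.map RBT.shape (RBT.restrict A (.node l r)) = some bal4U)
    (q := fun A => (A ⊆ I1 ∧ Option.map RBT.shape (RBT.restrict A l) = some bal4U) ∨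
       (A ⊆ I2 ∧ Option.map RBT.shape (RBT.restrict A r) = some bal4U) ∨
       ((I1 ∩ A).card = 2 ∧ (I2 ∩ A).card = 2))
    (fun A hA => by
      rw [Finset.mem_powersetCard] at hA
      exact node_shape_iff hd hl hr hA.1 hA.2)
  rw [heq, Finset.filter_or, Finset.filter_or]
  have hd1 : ∀ A : Finset ℕ, A ⊆ I1 → A.card = 4 → ¬ A ⊆ I2 := by
    intro A h1 hc h2
    have : A = ∅ := by
      apply Finset.eq_empty_of_forall_notMem
      intro a ha
      exact Finset.disjoint_left.mp hd (h1 ha) (h2 ha)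
    rw [this] at hc
    simp at hc
  have hsub1 : ∀ A : Finset ℕ, A ⊆ I1 → (I2 ∩ A).card = 0 := by
    intro A h1
    rw [Finset.card_eq_zero]
    apply Finset.eq_empty_of_forall_notMem
    intro a ha
    rw [Finset.mem_inter] at ha
    exact Finset.disjoint_left.mp hd (h1 ha.2) ha.1
  have hsub2 : ∀ A : Finset ℕ, A ⊆ I2 → (I1 ∩ A).card = 0 := by
    intro A h1
    rw [Finset.card_eq_zero]
    apply Finset.eq_empty_of_forall_notMem
    intro a ha
    rw [Finset.mem_inter] at ha
    exact Finset.disjoint_left.mp hd ha.1 (h1 ha.2)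
  have e1card : (Finset.filter (fun A => A ⊆ I1 ∧ Option.map RBT.shape (RBT.restrict A l) = some bal4U)
      (Finset.powersetCard 4 (I1 ∪ I2))) =
      (Finset.filter (fun A => Option.map RBT.shape (RBT.restrict A l) = some bal4U)
        (Finset.powersetCard 4 I1)) := by
    ext B
    simp only [Finset.mem_filter, Finset.mem_powersetCard]
    exact ⟨fun h => ⟨⟨h.2.1, h.1.2⟩, h.2.2⟩,
      fun h => ⟨⟨h.1.1.trans Finset.subset_union_left, h.1.2⟩, h.1.1, h.2⟩⟩
  have e2card : (Finset.filter (fun A => A ⊆ I2 ∧ Option.map RBT.shape (RBT.restrict A r) = some bal4U)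
      (Finset.powersetCard 4 (I1 ∪ I2))) =
      (Finset.filter (fun A => Option.map RBT.shape (RBT.restrict A r) = some bal4U)
        (Finset.powersetCard 4 I2)) := by
    ext B
    simp only [Finset.mem_filter, Finset.mem_powersetCard]
    exact ⟨fun h => ⟨⟨h.2.1, h.1.2⟩, h.2.2⟩,
      fun h => ⟨⟨h.1.1.trans Finset.subset_union_right, h.1.2⟩, h.1.1, h.2⟩⟩
  have e3card : (Finset.filter (fun A => (I1 ∩ A).card = 2 ∧ (I2 ∩ A).card = 2)
      (Finset.powersetCard 4 (I1 ∪ I2))).card = I1.card.choose 2 * I2.card.choose 2 := by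
    rw [← Finset.card_powersetCard, ← Finset.card_powersetCard, ← Finset.card_product]
    apply Finset.card_bij' (fun A _ => (I1 ∩ A, I2 ∩ A)) (fun P _ => P.1 ∪ P.2)
    · intro A hA
      rw [Finset.mem_filter, Finset.mem_powersetCard] at hA
      rw [Finset.mem_product]
      exact ⟨Finset.mem_powersetCard.mpr ⟨Finset.inter_subset_left, hA.2.1⟩,
        Finset.mem_powersetCard.mpr ⟨Finset.inter_subset_left, hA.2.2⟩⟩
    · intro P hP
      rw [Finset.mem_product, Finset.mem_powersetCard, Finset.mem_powersetCard] at hP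
      have hdBC : Disjoint P.1 P.2 := hd.mono hP.1.1 hP.2.1
      have d1 : I1 ∩ P.2 = ∅ := by
        apply Finset.eq_empty_of_forall_notMem
        intro a ha
        rw [Finset.mem_inter] at ha
        exact Finset.disjoint_left.mp hd ha.1 (hP.2.1 ha.2)
      have d2 : I2 ∩ P.1 = ∅ := by
        apply Finset.eq_empty_of_forall_notMem
        intro a ha
        rw [Finset.mem_inter] at ha
        exact Finset.disjoint_left.mp hd (hP.1.1 ha.2) ha.1
      have e1 : I1 ∩ (P.1 ∪ P.2) = P.1 := by
        rw [Finset.inter_union_distrib_left, Finset.inter_eq_right.mpr hP.1.1, d1,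
          Finset.union_empty]
      have e2 : I2 ∩ (P.1 ∪ P.2) = P.2 := by
        rw [Finset.inter_union_distrib_left, Finset.inter_eq_right.mpr hP.2.1, d2,
          Finset.empty_union]
      rw [Finset.mem_filter, Finset.mem_powersetCard]
      refine ⟨⟨Finset.union_subset (hP.1.1.trans Finset.subset_union_left)
        (hP.2.1.trans Finset.subset_union_right), ?_⟩, ?_, ?_⟩
      · rw [Finset.card_union_of_disjoint hdBC, hP.1.2, hP.2.2]
      · rw [e1, hP.1.2]
      · rw [e2, hP.2.2]
    · intro A hA
      rw [Finset.mem_filter, Finset.mem_powersetCard] at hA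
      rw [← Finset.union_inter_distrib_right, Finset.inter_eq_right.mpr hA.1.1]
    · intro P hP
      rw [Finset.mem_product, Finset.mem_powersetCard, Finset.mem_powersetCard] at hP
      have d1 : I1 ∩ P.2 = ∅ := by
        apply Finset.eq_empty_of_forall_notMem
        intro a ha
        rw [Finset.mem_inter] at ha
        exact Finset.disjoint_left.mp hd ha.1 (hP.2.1 ha.2)
      have d2 : I2 ∩ P.1 = ∅ := by
        apply Finset.eq_empty_of_forall_notMem
        intro a ha
        rw [Finset.mem_inter] at ha
        exact Finset.disjoint_left.mp hd (hP.1.1 ha.2) ha.1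
      have e1 : I1 ∩ (P.1 ∪ P.2) = P.1 := by
        rw [Finset.inter_union_distrib_left, Finset.inter_eq_right.mpr hP.1.1, d1,
          Finset.union_empty]
      have e2 : I2 ∩ (P.1 ∪ P.2) = P.2 := by
        rw [Finset.inter_union_distrib_left, Finset.inter_eq_right.mpr hP.2.1, d2,
          Finset.empty_union]
      exact Prod.ext e1 e2
  have hdisj23 : Disjoint
      (Finset.filter (fun A => A ⊆ I2 ∧ Option.map RBT.shape (RBT.restrict A r) = some bal4U)
        (Finset.powersetCard 4 (I1 ∪ I2)))
      (Finset.filter (fun A => (I1 ∩ A).card = 2 ∧ (I2 ∩ A).card = 2)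
        (Finset.powersetCard 4 (I1 ∪ I2))) := by
    rw [Finset.disjoint_left]
    intro A hA hA'
    rw [Finset.mem_filter] at hA hA'
    have := hsub2 A hA.2.1
    omega
  have hdisj123 : Disjoint
      (Finset.filter (fun A => A ⊆ I1 ∧ Option.map RBT.shape (RBT.restrict A l) = some bal4U)
        (Finset.powersetCard 4 (I1 ∪ I2)))
      ((Finset.filter (fun A => A ⊆ I2 ∧ Option.map RBT.shape (RBT.restrict A r) = some bal4U)
        (Finset.powersetCard 4 (I1 ∪ I2))) ∪
       (Finset.filter (fun A => (I1 ∩ A).card = 2 ∧ (I2 ∩ A).card = 2)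
        (Finset.powersetCard 4 (I1 ∪ I2)))) := by
    rw [Finset.disjoint_left]
    intro A hA hA'
    rw [Finset.mem_filter, Finset.mem_powersetCard] at hA
    rw [Finset.mem_union, Finset.mem_filter, Finset.mem_filter] at hA'
    rcases hA' with h | h
    · exact hd1 A hA.2.1 hA.1.2 h.2.1
    · have := hsub1 A hA.2.1
      omega
  rw [Finset.card_union_of_disjoint hdisj123, Finset.card_union_of_disjoint hdisj23,
    e1card, e2card, e3card]
  ring

/-- closed-form counter -/
def Mfun : ℕ → ℕ
  | 0 => 0
  | k + 1 => 2 * Mfun k + (Nat.choose (2 ^ k) 2) ^ 2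

lemma numLeaves_fullBal (k : ℕ) : (fullBal k).numLeaves = 2 ^ k := by
  induction k with
  | zero => rfl
  | succ k ih => simp [fullBal, RBT.numLeaves, ih, pow_succ]; ring

def bc (k o : ℕ) : ℕ :=
  (((Finset.Ico o (o + 2 ^ k)).powersetCard 4).filter
    (fun A => Option.map RBT.shape (RBT.restrict A (labelFrom (fullBal k) o).1) = some bal4U)).card

lemma bc_eq_M (k o : ℕ) : bc k o = Mfun k := by
  induction k generalizing o with
  | zero =>
    rw [bc, Mfun]
    have h1 : (((Finset.Ico o (o + 2 ^ 0)).powersetCard 4).filter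
        (fun A => Option.map RBT.shape (RBT.restrict A (labelFrom (fullBal 0) o).1)
          = some bal4U)).card ≤ ((Finset.Ico o (o + 2 ^ 0)).powersetCard 4).card :=
      Finset.card_filter_le _ _
    rw [Finset.card_powersetCard, Nat.card_Ico] at h1
    have h0 : (o + 2 ^ 0 - o).choose 4 = 0 := by simp; decide
    omega
  | succ k ih =>
    rw [bc, Mfun]
    have hfl : (labelFrom (fullBal (k+1)) o).1 =
        RBT.node (labelFrom (fullBal k) o).1 (labelFrom (fullBal k) (o + 2 ^ k)).1 := by
      show (labelFrom (RBT.node (fullBal k) (fullBal k)) o).1 = _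
      simp only [labelFrom, labelFrom_snd, numLeaves_fullBal]
    have hIco : Finset.Ico o (o + 2 ^ (k+1)) =
        Finset.Ico o (o + 2 ^ k) ∪ Finset.Ico (o + 2 ^ k) (o + 2 ^ k + 2 ^ k) := by
      have hp : 1 ≤ 2 ^ k := Nat.one_le_two_pow
      rw [Finset.Ico_union_Ico_eq_Ico (by omega) (by omega)]
      congr 1
      rw [pow_succ]; omega
    have hdisj : Disjoint (Finset.Ico o (o + 2 ^ k)) (Finset.Ico (o + 2 ^ k) (o + 2 ^ k + 2 ^ k)) :=
      Finset.Ico_disjoint_Ico_consecutive _ _ _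
    have h1 : (labelFrom (fullBal k) o).1.leaves = (Finset.Ico o (o + 2 ^ k)).val := by
      rw [labelFrom_leaves, numLeaves_fullBal]
    have h2 : (labelFrom (fullBal k) (o + 2 ^ k)).1.leaves
        = (Finset.Ico (o + 2 ^ k) (o + 2 ^ k + 2 ^ k)).val := by
      rw [labelFrom_leaves, numLeaves_fullBal]
    rw [hfl, hIco, card_filter_bal hdisj h1 h2]
    rw [Nat.card_Ico, Nat.card_Ico]
    have := ih o
    have := ih (o + 2 ^ k)
    rw [bc] at *
    simp only [Nat.add_sub_cancel_left] at *
    have hsq : ((2 ^ k).choose 2) ^ 2 = (2 ^ k).choose 2 * (2 ^ k).choose 2 := pow_two _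
    omega

lemma canon_bal4U : RBT.canon bal4U = bal4U := rfl

lemma countRestr_eq_M (k : ℕ) : countRestr (fullBal k) bal4U 4 = Mfun k := by
  rw [← bc_eq_M k 0, countRestr, bc, label, canon_bal4U]
  congr 2
  rw [labelFrom_leaves, numLeaves_fullBal, Finset.val_toFinset]

lemma choose2_eq (k : ℕ) : 2 * (2 ^ k).choose 2 = 2 ^ k * (2 ^ k - 1) := by
  have hn : 1 ≤ 2 ^ k := Nat.one_le_two_pow
  have he : Even (2 ^ k * (2 ^ k - 1)) := by
    have := Nat.even_mul_succ_self (2 ^ k - 1)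
    rw [Nat.sub_add_cancel hn] at this
    rwa [mul_comm] at this
  rw [Nat.choose_two_right, Nat.mul_div_cancel' he.two_dvd]

lemma M_real (k : ℕ) : 168 * (Mfun k : ℝ) =
    3 * ((2:ℝ)^k)^4 - 14 * ((2:ℝ)^k)^3 + 21 * ((2:ℝ)^k)^2 - 10 * (2:ℝ)^k := by
  induction k with
  | zero => simp [Mfun]; norm_num
  | succ k ih =>
    have hn : 1 ≤ 2 ^ k := Nat.one_le_two_pow
    have hC2 : 2 * (((2 ^ k).choose 2 : ℕ) : ℝ) = (2:ℝ)^k * ((2:ℝ)^k - 1) := by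
      have := choose2_eq k
      have := congrArg (fun x : ℕ => (x : ℝ)) this
      push_cast [Nat.cast_sub hn] at this
      push_cast
      linarith
    have hM : (Mfun (k+1) : ℝ) = 2 * (Mfun k : ℝ) + (((2 ^ k).choose 2 : ℕ) : ℝ)^2 := by
      rw [Mfun]; push_cast; ring
    rw [hM, pow_succ]
    linear_combination 2 * ih +
      (84 * (((2 ^ k).choose 2 : ℕ) : ℝ) + 42 * ((2:ℝ)^k * ((2:ℝ)^k - 1))) * hC2

lemma choose4_eq (n : ℕ) : 24 * n.choose 4 = n.descFactorial 4 := by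
  rw [Nat.descFactorial_eq_factorial_mul_choose]
  norm_num [Nat.factorial]

lemma choose4_real (k : ℕ) (hk : 2 ≤ k) : 24 * (((2 ^ k).choose 4 : ℕ) : ℝ) =
    (2:ℝ)^k * ((2:ℝ)^k - 1) * ((2:ℝ)^k - 2) * ((2:ℝ)^k - 3) := by
  have h4 : 4 ≤ 2 ^ k := by
    calc 4 = 2 ^ 2 := rfl
    _ ≤ 2 ^ k := Nat.pow_le_pow_right (by norm_num) hk
  have := choose4_eq (2 ^ k)
  have h := congrArg (fun x : ℕ => (x : ℝ)) this
  simp only [Nat.descFactorial, Nat.sub_zero] at h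
  push_cast [Nat.cast_sub (by omega : 1 ≤ 2 ^ k), Nat.cast_sub (by omega : 2 ≤ 2 ^ k),
    Nat.cast_sub (by omega : 3 ≤ 2 ^ k)] at h
  rw [h]; ring

lemma M_sum (j : ℕ) :
    Mfun (j + 1) = ∑ i ∈ Finset.Icc 1 j, 2 ^ (j - i) * ((2 ^ i).choose 2) ^ 2 := by
  induction j with
  | zero => simp [Mfun]
  | succ j ih =>
    rw [show Mfun (j + 2) = 2 * Mfun (j + 1) + ((2 ^ (j + 1)).choose 2) ^ 2 from rfl, ih,
      Finset.sum_Icc_succ_top (by omega : 1 ≤ j + 1), Finset.mul_sum]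
    congr 1
    · apply Finset.sum_congr rfl
      intro i hi
      rw [Finset.mem_Icc] at hi
      have : j + 1 - i = (j - i) + 1 := by omega
      rw [this, pow_succ]
      ring
    · simp

lemma ratio_eq (k : ℕ) (hk : 2 ≤ k) :
    ((Mfun k : ℕ) : ℝ) / (((2 ^ k).choose 4 : ℕ) : ℝ) =
      (3 * (2:ℝ)^k - 5) / (7 * (2:ℝ)^k - 21) := by
  have h4 : 4 ≤ 2 ^ k := by
    calc 4 = 2 ^ 2 := rfl
    _ ≤ 2 ^ k := Nat.pow_le_pow_right (by norm_num) hk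
  have hx : (4:ℝ) ≤ (2:ℝ)^k := by
    calc (4:ℝ) = 2 ^ 2 := by norm_num
    _ ≤ 2 ^ k := pow_le_pow_right₀ (by norm_num) hk
  have hC4pos : 0 < ((2 ^ k).choose 4) := Nat.choose_pos h4
  have hC4ne : (((2 ^ k).choose 4 : ℕ) : ℝ) ≠ 0 := by positivity
  have h7ne : 7 * (2:ℝ)^k - 21 ≠ 0 := by nlinarith
  rw [div_eq_div_iff hC4ne h7ne]
  linear_combination ((7 * (2:ℝ)^k - 21) / 168) * M_real k
    - ((3 * (2:ℝ)^k - 5) / 24) * choose4_real k hk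

theorem balanced_bal4_density_aux :
    countRestr (fullBal 1) bal4U 4 = 0 ∧
    (∀ k : ℕ, 2 ≤ k →
      countRestr (fullBal k) bal4U 4 =
        2 * countRestr (fullBal (k - 1)) bal4U 4 + (Nat.choose (2 ^ (k - 1)) 2) ^ 2) ∧
    (∀ k : ℕ, 2 ≤ k →
      countRestr (fullBal k) bal4U 4 =
        ∑ i ∈ Finset.Icc 1 (k - 1), 2 ^ (k - i - 1) * (Nat.choose (2 ^ i) 2) ^ 2) ∧
    (∀ k : ℕ, 2 ≤ k →
      (countRestr (fullBal k) bal4U 4 : ℝ) / (Nat.choose (2 ^ k) 4 : ℝ) =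
        (3 * (2 : ℝ) ^ k - 5) / (7 * (2 : ℝ) ^ k - 21)) ∧
    Filter.Tendsto
      (fun k : ℕ => (countRestr (fullBal k) bal4U 4 : ℝ) / (Nat.choose (2 ^ k) 4 : ℝ))
      Filter.atTop (nhds (3 / 7)) := by
  refine ⟨?_, ?_, ?_, ?_, ?_⟩
  · rw [countRestr_eq_M]; rfl
  · intro k hk
    obtain ⟨j, rfl⟩ : ∃ j, k = j + 1 := ⟨k - 1, by omega⟩
    rw [countRestr_eq_M, countRestr_eq_M]
    simp only [Nat.add_sub_cancel]
    rfl
  · intro k hk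
    obtain ⟨j, rfl⟩ : ∃ j, k = j + 1 := ⟨k - 1, by omega⟩
    rw [countRestr_eq_M, M_sum]
    simp only [Nat.add_sub_cancel]
    apply Finset.sum_congr rfl
    intro i hi
    congr 2
    omega
  · intro k hk
    rw [countRestr_eq_M]
    exact ratio_eq k hk
  · have h0 : Filter.Tendsto (fun k : ℕ => ((1:ℝ)/2)^k) Filter.atTop (nhds 0) :=
      tendsto_pow_atTop_nhds_zero_of_lt_one (by norm_num) (by norm_num)
    have hnum : Filter.Tendsto (fun k : ℕ => 3 - 5 * ((1:ℝ)/2)^k) Filter.atTop (nhds 3) := by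
      have := (h0.const_mul (5:ℝ)).const_sub (3:ℝ)
      simpa using this
    have hden : Filter.Tendsto (fun k : ℕ => 7 - 21 * ((1:ℝ)/2)^k) Filter.atTop (nhds 7) := by
      have := (h0.const_mul (21:ℝ)).const_sub (7:ℝ)
      simpa using this
    have hlim : Filter.Tendsto
        (fun k : ℕ => (3 - 5 * ((1:ℝ)/2)^k) / (7 - 21 * ((1:ℝ)/2)^k))
        Filter.atTop (nhds (3 / 7)) := hnum.div hden (by norm_num)
    apply hlim.congr'
    rw [Filter.eventuallyEq_iff_exists_mem]
    refine ⟨{k | 2 ≤ k}, Filter.mem_atTop 2, ?_⟩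
    intro k hk
    simp only [Set.mem_setOf_eq] at hk
    show _ = (countRestr (fullBal k) bal4U 4 : ℝ) / (((2 ^ k).choose 4 : ℕ) : ℝ)
    rw [countRestr_eq_M, ratio_eq k hk]
    have hx : (0:ℝ) < (2:ℝ)^k := by positivity
    have hx4 : (4:ℝ) ≤ (2:ℝ)^k := by
      calc (4:ℝ) = 2 ^ 2 := by norm_num
      _ ≤ 2 ^ k := pow_le_pow_right₀ (by norm_num) hk
    have h1 : ((1:ℝ)/2)^k = ((2:ℝ)^k)⁻¹ := by
      rw [one_div, inv_pow]
    simp only []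
    rw [h1]
    have hinv : ((2:ℝ)^k)⁻¹ ≤ 4⁻¹ := by
      apply inv_anti₀ (by norm_num) hx4
    have hinvpos : (0:ℝ) < ((2:ℝ)^k)⁻¹ := by positivity
    rw [eq_comm, div_eq_div_iff (by nlinarith : 7 * (2:ℝ)^k - 21 ≠ 0)
      (by nlinarith : 7 - 21 * ((2:ℝ)^k)⁻¹ ≠ 0)]
    field_simp

/-- For `k ≥ 2`, let `m(k)` be the number of `4`-element subsets
`A` of the leaves of the complete balanced binary tree with `2^k` leaves whose
restriction tree has the balanced shape `Bal_4`.  Then `m` satisfies the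
recurrence `m(k) = 2·m(k−1) + C(2^{k−1}, 2)²` (with `m(1) = 0`), has closed form
`m(k) = Σ_{i=1}^{k−1} 2^{k−i−1}·C(2^i, 2)²`, satisfies
`m(k)/C(2^k, 4) = (3·2^k − 5)/(7·2^k − 21)`, and hence
`m(k)/C(2^k, 4) → 3/7` as `k → ∞`. -/
theorem balanced_bal4_density :
    countRestr (fullBal 1) bal4U 4 = 0 ∧
    (∀ k : ℕ, 2 ≤ k →
      countRestr (fullBal k) bal4U 4 =
        2 * countRestr (fullBal (k - 1)) bal4U 4 + (Nat.choose (2 ^ (k - 1)) 2) ^ 2) ∧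
    (∀ k : ℕ, 2 ≤ k →
      countRestr (fullBal k) bal4U 4 =
        ∑ i ∈ Finset.Icc 1 (k - 1), 2 ^ (k - i - 1) * (Nat.choose (2 ^ i) 2) ^ 2) ∧
    (∀ k : ℕ, 2 ≤ k →
      (countRestr (fullBal k) bal4U 4 : ℝ) / (Nat.choose (2 ^ k) 4 : ℝ) =
        (3 * (2 : ℝ) ^ k - 5) / (7 * (2 : ℝ) ^ k - 21)) ∧
    Filter.Tendsto
      (fun k : ℕ => (countRestr (fullBal k) bal4U 4 : ℝ) / (Nat.choose (2 ^ k) 4 : ℝ))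
      Filter.atTop (nhds (3 / 7)) := by
  exact balanced_bal4_density_aux
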